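/- The sequence u_2(n) := Σ_{k≥0} a(n,k)^2 satisfies the linear recurrence u_2(n) = 5 u_2(n-1) - 2 u_2(n-2) for all n ≥ 2, with u_2(0) = 1 and u_2(1) = 3. -/

import Mathlib

open Polynomial

noncomputable def F (n : ℕ) : Polynomial ℤ :=
  ∏ i ∈ Finset.range n, (1 + X ^ (2 ^ i) + X ^ (2 ^ (i + 1)))

noncomputable def a (n : ℕ) (k : ℕ) : ℤ := (F n).coeff k

noncomputable def u2 (n : ℕ) : ℤ := ∑ᶠ k : ℕ, (a n k) ^ 2

/-! Auxiliary development -/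

lemma sumPowTwoSucc (m : ℕ) : ∑ i ∈ Finset.range m, 2 ^ (i + 1) = 2 ^ (m + 1) - 2 := by
  induction m with
  | zero => simp
  | succ n ih =>
    rw [Finset.sum_range_succ, ih]
    have : (2:ℕ) ≤ 2 ^ (n + 1) := Nat.one_lt_two_pow_iff.mpr (by omega)
    rw [pow_succ 2 (n+1)]
    omega

lemma F_natDegree (m : ℕ) : (F m).natDegree ≤ 2 ^ (m + 1) - 2 := by
  have h1 : (F m).natDegree ≤ ∑ i ∈ Finset.range m,
      ((1 : Polynomial ℤ) + X ^ (2 ^ i) + X ^ (2 ^ (i + 1))).natDegree :=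
    Polynomial.natDegree_prod_le _ _
  have h2 : ∀ i, ((1 : Polynomial ℤ) + X ^ (2 ^ i) + X ^ (2 ^ (i + 1))).natDegree ≤ 2 ^ (i + 1) := by
    intro i
    refine le_trans (natDegree_add_le _ _) ?_
    simp only [natDegree_X_pow, max_le_iff]
    constructor
    · refine le_trans (natDegree_add_le _ _) ?_
      simp only [natDegree_one, natDegree_X_pow, max_le_iff]
      exact ⟨Nat.zero_le _, Nat.pow_le_pow_right (by norm_num) (by omega)⟩
    · exact le_rfl
  have h3 : ∑ i ∈ Finset.range m,
      ((1 : Polynomial ℤ) + X ^ (2 ^ i) + X ^ (2 ^ (i + 1))).natDegree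
      ≤ ∑ i ∈ Finset.range m, 2 ^ (i + 1) :=
    Finset.sum_le_sum fun i _ => h2 i
  have h4 := sumPowTwoSucc m
  omega

lemma a_eq_zero (m k : ℕ) (h : 2 ^ (m + 1) - 1 ≤ k) : a m k = 0 := by
  apply Polynomial.coeff_eq_zero_of_natDegree_lt
  have := F_natDegree m
  have h2 : (2:ℕ) ≤ 2 ^ (m + 1) := Nat.one_lt_two_pow_iff.mpr (by omega)
  omega

lemma a_succ (m k : ℕ) : a (m + 1) k = a m k
    + (if 2 ^ m ≤ k then a m (k - 2 ^ m) else 0)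
    + (if 2 ^ (m + 1) ≤ k then a m (k - 2 ^ (m + 1)) else 0) := by
  show (F (m+1)).coeff k = _
  rw [F, Finset.prod_range_succ, mul_add, mul_add, mul_one, coeff_add, coeff_add,
    coeff_mul_X_pow', coeff_mul_X_pow']
  rfl

lemma shift_sum (f : ℕ → ℤ) (s N : ℕ) (h : s ≤ N) :
    ∑ k ∈ Finset.range N, (if s ≤ k then f (k - s) else 0)
      = ∑ j ∈ Finset.range (N - s), f j := by
  have hsplit : (∑ k ∈ Finset.Ico 0 s, (if s ≤ k then f (k - s) else 0))
      + ∑ k ∈ Finset.Ico s N, (if s ≤ k then f (k - s) else 0)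
      = ∑ k ∈ Finset.Ico 0 N, (if s ≤ k then f (k - s) else 0) :=
    Finset.sum_Ico_consecutive _ (Nat.zero_le s) h
  have h1 : ∑ k ∈ Finset.Ico 0 s, (if s ≤ k then f (k - s) else 0) = 0 := by
    apply Finset.sum_eq_zero
    intro k hk
    rw [Finset.mem_Ico] at hk
    rw [if_neg (by omega)]
  have h2 : ∑ k ∈ Finset.Ico s N, (if s ≤ k then f (k - s) else 0)
      = ∑ j ∈ Finset.range (N - s), f j := by
    rw [Finset.sum_Ico_eq_sum_range]
    apply Finset.sum_congr rfl
    intro j _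
    rw [if_pos (by omega), Nat.add_sub_cancel_left]
  rw [Finset.range_eq_Ico, ← hsplit, h1, h2, zero_add]

lemma extend_sum (f : ℕ → ℤ) (M N : ℕ) (hMN : M ≤ N) (h : ∀ k, M ≤ k → f k = 0) :
    ∑ k ∈ Finset.range N, f k = ∑ k ∈ Finset.range M, f k := by
  symm
  apply Finset.sum_subset (Finset.range_subset_range.mpr hMN)
  intro k _ hk
  rw [Finset.mem_range, not_lt] at hk
  exact h k hk

noncomputable def B (m : ℕ) : ℤ := ∑ k ∈ Finset.range (2 ^ (m + 1)), (a m k) ^ 2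

noncomputable def V (m : ℕ) : ℤ := ∑ k ∈ Finset.range (2 ^ (m + 1)), a m k * a m (k + 2 ^ m)

lemma u2_eq_B (m : ℕ) : u2 m = B m := by
  apply finsum_eq_sum_of_support_subset
  intro k hk
  simp only [Function.mem_support] at hk
  simp only [Finset.coe_range, Set.mem_Iio]
  by_contra hlt
  push_neg at hlt
  exact hk (by rw [a_eq_zero m k (by omega)]; ring)

lemma B_succ (m : ℕ) : B (m + 1) = 3 * B m + 4 * V m := by
  have hs : (2:ℕ) ^ (m + 1) = 2 * 2 ^ m := by ring
  have hs2 : (2:ℕ) ^ (m + 2) = 4 * 2 ^ m := by ring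
  set s := 2 ^ m with hsdef
  -- pointwise expansion
  have key : ∀ k, (a (m + 1) k) ^ 2 = (a m k) ^ 2
      + (if s ≤ k then ((a m (k - s)) ^ 2 + 2 * a m (k - s) * a m ((k - s) + s)) else 0)
      + (if 2 * s ≤ k then ((a m (k - 2 * s)) ^ 2 + 2 * a m (k - 2 * s) * a m ((k - 2 * s) + s)
          + 2 * a m (k - 2 * s) * a m ((k - 2 * s) + 2 * s)) else 0) := by
    intro k
    rw [a_succ, hs]
    by_cases h2 : 2 * s ≤ k
    · rw [if_pos h2, if_pos (by omega), if_pos h2, if_pos (by omega)]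
      have e1 : k - s + s = k := by omega
      have e2 : k - 2 * s + s = k - s := by omega
      have e3 : k - 2 * s + 2 * s = k := by omega
      rw [e1, e2, e3]; ring
    · rw [if_neg h2, if_neg h2]
      by_cases h1 : s ≤ k
      · rw [if_pos h1, if_pos h1]
        have e1 : k - s + s = k := by omega
        rw [e1]; ring
      · rw [if_neg h1, if_neg h1]; ring
  have hzero : ∀ j, 2 * s ≤ j → a m j = 0 := by
    intro j hj
    exact a_eq_zero m j (by rw [hs]; omega)
  have sh1 : ∑ k ∈ Finset.range (4 * s),
      (if s ≤ k then ((a m (k - s)) ^ 2 + 2 * a m (k - s) * a m ((k - s) + s)) else 0)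
      = ∑ j ∈ Finset.range (3 * s), ((a m j) ^ 2 + 2 * a m j * a m (j + s)) := by
    have := shift_sum (fun j => (a m j) ^ 2 + 2 * a m j * a m (j + s)) s (4 * s) (by omega)
    have h4s : 4 * s - s = 3 * s := by omega
    rw [h4s] at this
    simpa using this
  have sh2 : ∑ k ∈ Finset.range (4 * s),
      (if 2 * s ≤ k then ((a m (k - 2 * s)) ^ 2 + 2 * a m (k - 2 * s) * a m ((k - 2 * s) + s)
          + 2 * a m (k - 2 * s) * a m ((k - 2 * s) + 2 * s)) else 0)
      = ∑ j ∈ Finset.range (2 * s), ((a m j) ^ 2 + 2 * a m j * a m (j + s)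
          + 2 * a m j * a m (j + 2 * s)) := by
    have := shift_sum (fun j => (a m j) ^ 2 + 2 * a m j * a m (j + s)
      + 2 * a m j * a m (j + 2 * s)) (2 * s) (4 * s) (by omega)
    have h4s2 : 4 * s - 2 * s = 2 * s := by omega
    rw [h4s2] at this
    simpa using this
  rw [B, Finset.sum_congr rfl (fun k _ => key k), Finset.sum_add_distrib,
    Finset.sum_add_distrib, hs2, sh1, sh2]
  -- first sum : squares, supported below 2*s
  have e1 : ∑ k ∈ Finset.range (4 * s), (a m k) ^ 2 = B m := by
    rw [extend_sum _ (2 * s) _ (by omega) (fun k hk => by rw [hzero k hk]; ring), B, hs]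
  -- second sum
  have e2 : ∑ j ∈ Finset.range (3 * s), ((a m j) ^ 2 + 2 * a m j * a m (j + s))
      = B m + 2 * V m := by
    rw [extend_sum _ (2 * s) _ (by omega) (fun k hk => by rw [hzero k hk]; ring),
      Finset.sum_add_distrib, B, V, hs, Finset.mul_sum]
    congr 1
    apply Finset.sum_congr rfl
    intro j _; ring
  -- third sum
  have e3 : ∑ j ∈ Finset.range (2 * s), ((a m j) ^ 2 + 2 * a m j * a m (j + s)
      + 2 * a m j * a m (j + 2 * s)) = B m + 2 * V m := by
    have : ∀ j ∈ Finset.range (2 * s), (a m j) ^ 2 + 2 * a m j * a m (j + s)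
        + 2 * a m j * a m (j + 2 * s) = (a m j) ^ 2 + 2 * a m j * a m (j + s) := by
      intro j _
      rw [hzero (j + 2 * s) (by omega)]; ring
    rw [Finset.sum_congr rfl this, Finset.sum_add_distrib, B, V, hs, Finset.mul_sum]
    congr 1
    apply Finset.sum_congr rfl
    intro j _; ring
  rw [e1, e2, e3]; ring

lemma V_succ (m : ℕ) : V (m + 1) = B m + 2 * V m := by
  have hs : (2:ℕ) ^ (m + 1) = 2 * 2 ^ m := by ring
  have hs2 : (2:ℕ) ^ (m + 2) = 4 * 2 ^ m := by ring
  set s := 2 ^ m with hsdef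
  have hzero : ∀ j, 2 * s ≤ j → a m j = 0 := by
    intro j hj
    exact a_eq_zero m j (by rw [hs]; omega)
  have key : ∀ k, a (m + 1) k * a (m + 1) (k + 2 * s)
      = (a m k * a m (k + 2 * s) + a m k * a m (k + s) + (a m k) ^ 2)
      + (if s ≤ k then (a m (k - s) * (a m ((k - s) + 3 * s) + a m ((k - s) + 2 * s)
          + a m ((k - s) + s))) else 0)
      + (if 2 * s ≤ k then (a m (k - 2 * s) * (a m ((k - 2 * s) + 4 * s)
          + a m ((k - 2 * s) + 3 * s) + a m ((k - 2 * s) + 2 * s))) else 0) := by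
    intro k
    rw [a_succ, a_succ, hs]
    rw [if_pos (show s ≤ k + 2 * s by omega), if_pos (show 2 * s ≤ k + 2 * s by omega)]
    have e1 : k + 2 * s - s = k + s := by omega
    have e2 : k + 2 * s - 2 * s = k := by omega
    rw [e1, e2]
    by_cases h2 : 2 * s ≤ k
    · rw [if_pos h2, if_pos (by omega : s ≤ k), if_pos h2, if_pos (by omega : s ≤ k)]
      have f1 : k - s + s = k := by omega
      have f2 : k - s + 2 * s = k + s := by omega
      have f3 : k - s + 3 * s = k + 2 * s := by omega
      have f4 : k - 2 * s + 2 * s = k := by omega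
      have f5 : k - 2 * s + 3 * s = k + s := by omega
      have f6 : k - 2 * s + 4 * s = k + 2 * s := by omega
      rw [f1, f2, f3, f4, f5, f6]; ring
    · rw [if_neg h2, if_neg h2]
      by_cases h1 : s ≤ k
      · rw [if_pos h1, if_pos h1]
        have f1 : k - s + s = k := by omega
        have f2 : k - s + 2 * s = k + s := by omega
        have f3 : k - s + 3 * s = k + 2 * s := by omega
        rw [f1, f2, f3]; ring
      · rw [if_neg h1, if_neg h1]; ring
  have hVrw : V (m + 1) = ∑ k ∈ Finset.range (4 * s),
      a (m + 1) k * a (m + 1) (k + 2 * s) := by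
    rw [V, hs2, hs]
  have sh1 : ∑ k ∈ Finset.range (4 * s),
      (if s ≤ k then (a m (k - s) * (a m ((k - s) + 3 * s) + a m ((k - s) + 2 * s)
          + a m ((k - s) + s))) else 0)
      = ∑ j ∈ Finset.range (3 * s),
          a m j * (a m (j + 3 * s) + a m (j + 2 * s) + a m (j + s)) := by
    have := shift_sum (fun j => a m j * (a m (j + 3 * s) + a m (j + 2 * s) + a m (j + s)))
      s (4 * s) (by omega)
    have h4s : 4 * s - s = 3 * s := by omega
    rw [h4s] at this
    simpa using this
  have sh2 : ∑ k ∈ Finset.range (4 * s),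
      (if 2 * s ≤ k then (a m (k - 2 * s) * (a m ((k - 2 * s) + 4 * s)
          + a m ((k - 2 * s) + 3 * s) + a m ((k - 2 * s) + 2 * s))) else 0)
      = ∑ j ∈ Finset.range (2 * s),
          a m j * (a m (j + 4 * s) + a m (j + 3 * s) + a m (j + 2 * s)) := by
    have := shift_sum (fun j => a m j * (a m (j + 4 * s) + a m (j + 3 * s) + a m (j + 2 * s)))
      (2 * s) (4 * s) (by omega)
    have h4s2 : 4 * s - 2 * s = 2 * s := by omega
    rw [h4s2] at this
    simpa using this
  rw [hVrw, Finset.sum_congr rfl (fun k _ => key k), Finset.sum_add_distrib,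
    Finset.sum_add_distrib, sh1, sh2]
  have e1 : ∑ k ∈ Finset.range (4 * s),
      (a m k * a m (k + 2 * s) + a m k * a m (k + s) + (a m k) ^ 2) = V m + B m := by
    have : ∀ k ∈ Finset.range (4 * s),
        a m k * a m (k + 2 * s) + a m k * a m (k + s) + (a m k) ^ 2
        = a m k * a m (k + s) + (a m k) ^ 2 := by
      intro k _
      rw [hzero (k + 2 * s) (by omega)]; ring
    rw [Finset.sum_congr rfl this,
      extend_sum _ (2 * s) _ (by omega) (fun k hk => by rw [hzero k hk]; ring),
      Finset.sum_add_distrib, V, B, hs]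
  have e2 : ∑ j ∈ Finset.range (3 * s),
      a m j * (a m (j + 3 * s) + a m (j + 2 * s) + a m (j + s)) = V m := by
    have : ∀ j ∈ Finset.range (3 * s),
        a m j * (a m (j + 3 * s) + a m (j + 2 * s) + a m (j + s)) = a m j * a m (j + s) := by
      intro j _
      rw [hzero (j + 3 * s) (by omega), hzero (j + 2 * s) (by omega)]; ring
    rw [Finset.sum_congr rfl this,
      extend_sum _ (2 * s) _ (by omega) (fun k hk => by rw [hzero k hk]; ring), V, hs]
  have e3 : ∑ j ∈ Finset.range (2 * s),
      a m j * (a m (j + 4 * s) + a m (j + 3 * s) + a m (j + 2 * s)) = 0 := by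
    apply Finset.sum_eq_zero
    intro j _
    rw [hzero (j + 4 * s) (by omega), hzero (j + 3 * s) (by omega),
      hzero (j + 2 * s) (by omega)]
    ring
  rw [e1, e2, e3]; ring

lemma B_zero : B 0 = 1 := by
  have hF : F 0 = 1 := by simp [F]
  simp [B, a, hF, Finset.sum_range_succ, Polynomial.coeff_one]

lemma B_one : B 1 = 3 := by
  have hF : F 1 = 1 + X + X ^ 2 := by
    simp [F]
  simp [B, a, hF, Finset.sum_range_succ, Polynomial.coeff_one, Polynomial.coeff_X,
    Polynomial.coeff_X_pow]

theorem u2_recurrence :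
    u2 0 = 1 ∧ u2 1 = 3 ∧ ∀ n : ℕ, 2 ≤ n → u2 n = 5 * u2 (n - 1) - 2 * u2 (n - 2) := by
  refine ⟨by rw [u2_eq_B, B_zero], by rw [u2_eq_B, B_one], ?_⟩
  intro n hn
  obtain ⟨m, rfl⟩ : ∃ m, n = m + 2 := ⟨n - 2, by omega⟩
  have h1 : m + 2 - 1 = m + 1 := by omega
  have h2 : m + 2 - 2 = m := by omega
  rw [h1, h2, u2_eq_B, u2_eq_B, u2_eq_B, B_succ (m + 1), B_succ m, V_succ m]
  ring
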